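/- arXiv:0709.1506 — 4 statements merged into one kernel-verified Lean document; each statement's English description precedes it below -/
import Mathlib

section
/- Let $\sigma\in(0,1)$, $\eta>0$, $s>0$, and $x_1,\ldots,x_n\in\mathbb{R}$. If there exists $z\in[s,(1+\eta\sigma)s]$ with $n^{-1}\sum_{i=1}^n (x_i/z-1)^2 \le \sigma^2$, then $n^{-1}\sum_{i=1}^n (x_i/s-1)^2 \le (1+\eta\sigma)^2(1+\eta)^2\sigma^2$. -/
open Finset

/-- Deterministic scaling lemma (Lemma 2): if some `z ∈ [s, (1+ησ)s]` satisfies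
`n⁻¹ ∑ (xᵢ/z - 1)² ≤ σ²`, then `n⁻¹ ∑ (xᵢ/s - 1)² ≤ (1+ησ)²(1+η)²σ²`. -/
theorem stmt_3 (n : ℕ) (hn : 0 < n) (σ η s : ℝ) (hσ : σ ∈ Set.Ioo (0 : ℝ) 1)
    (hη : 0 < η) (hs : 0 < s) (x : Fin n → ℝ)
    (hz : ∃ z ∈ Set.Icc s ((1 + η * σ) * s),
      (∑ i, (x i / z - 1) ^ 2) / n ≤ σ ^ 2) :
    (∑ i, (x i / s - 1) ^ 2) / n ≤ (1 + η * σ) ^ 2 * (1 + η) ^ 2 * σ ^ 2 := by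
  obtain ⟨z, ⟨hz1, hz2⟩, hQ⟩ := hz
  obtain ⟨hσ0, hσ1⟩ := hσ
  have hzpos : 0 < z := lt_of_lt_of_le hs hz1
  have hnpos : (0:ℝ) < n := by exact_mod_cast hn
  set r := z / s with hr
  have hr1 : 1 ≤ r := (one_le_div hs).mpr hz1
  have hr2 : r ≤ 1 + η * σ := by rw [hr, div_le_iff₀ hs]; linarith [hz2]
  have key : ∀ i, η * (x i / s - 1)^2 ≤
      η*(1+η)*r^2*(x i / z - 1)^2 + (1+η)*(r-1)^2 := by
    intro i
    have hx : x i / s = r * (x i / z) := by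
      rw [hr]; field_simp
    rw [hx]
    nlinarith [sq_nonneg (η * (r * (x i / z) - r) - (r - 1)), hη.le,
      sq_nonneg (r * (x i / z) - r)]
  have hsum := Finset.sum_le_sum (fun i (_ : i ∈ Finset.univ) => key i)
  rw [Finset.sum_add_distrib, ← Finset.mul_sum, ← Finset.mul_sum,
    Finset.sum_const, Finset.card_univ, Fintype.card_fin] at hsum
  have hU : ∑ i, (x i / z - 1)^2 ≤ n * σ^2 := by
    rw [div_le_iff₀ hnpos] at hQ; linarith
  have hU0 : (0:ℝ) ≤ ∑ i, (x i / z - 1)^2 :=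
    Finset.sum_nonneg (fun i _ => sq_nonneg _)
  rw [nsmul_eq_mul] at hsum
  have hr2sq : r^2 ≤ (1 + η*σ)^2 := by nlinarith
  have h1 : η*(1+η)*r^2 * ∑ i, (x i / z - 1)^2 ≤
      η*(1+η)*(1+η*σ)^2 * (n*σ^2) := by
    apply mul_le_mul _ hU hU0 (by positivity)
    exact mul_le_mul_of_nonneg_left hr2sq (by positivity)
  have h2 : (r-1)^2 ≤ η^2*σ^2 := by nlinarith
  have h3 : η*(1+η)*(1+η*σ)^2*σ^2 + (1+η)*(η^2*σ^2) ≤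
      η*((1 + η * σ) ^ 2 * (1 + η) ^ 2 * σ ^ 2) := by
    have hid : η*((1 + η * σ) ^ 2 * (1 + η) ^ 2 * σ ^ 2) -
        (η*(1+η)*(1+η*σ)^2*σ^2 + (1+η)*(η^2*σ^2)) =
        η^3*(1+η)*σ^3*(2+η*σ) := by ring
    have hησ : 0 < η * σ := mul_pos hη hσ0
    have hpos : 0 < η^3*(1+η)*σ^3*(2+η*σ) :=
      mul_pos (mul_pos (mul_pos (pow_pos hη 3) (by linarith : (0:ℝ) < 1+η))
        (pow_pos hσ0 3)) (by linarith : (0:ℝ) < 2+η*σ)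
    linarith [hid, hpos]
  have h4 : (n:ℝ)*(η*(1+η)*(1+η*σ)^2*σ^2 + (1+η)*(η^2*σ^2)) ≤
      (n:ℝ)*(η*((1 + η * σ) ^ 2 * (1 + η) ^ 2 * σ ^ 2)) :=
    mul_le_mul_of_nonneg_left h3 hnpos.le
  rw [div_le_iff₀ hnpos]
  have h2' : (n:ℝ)*((1+η)*(r-1)^2) ≤ (n:ℝ)*((1+η)*(η^2*σ^2)) := by
    apply mul_le_mul_of_nonneg_left _ hnpos.le
    exact mul_le_mul_of_nonneg_left h2 (by linarith)
  have h5 : η * ∑ i, (x i / s - 1)^2 ≤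
      η * ((1 + η * σ) ^ 2 * (1 + η) ^ 2 * σ ^ 2 * ↑n) := by
    have e1 : η*(1+η)*(1+η*σ)^2 * ((n:ℝ)*σ^2) + (n:ℝ)*((1+η)*(η^2*σ^2)) =
        (n:ℝ)*(η*(1+η)*(1+η*σ)^2*σ^2 + (1+η)*(η^2*σ^2)) := by ring
    have e2 : (n:ℝ)*(η*((1 + η * σ) ^ 2 * (1 + η) ^ 2 * σ ^ 2)) =
        η * ((1 + η * σ) ^ 2 * (1 + η) ^ 2 * σ ^ 2 * ↑n) := by ring
    linarith [hsum, h1, h2', h4, e1.ge, e1.le, e2.ge, e2.le]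
  exact le_of_mul_le_mul_left h5 hη
end

section
/- Fix $z>0$, and suppose the probability density $f$ is continuous at $z$, $f(z)>0$, and $\sup f<\infty$. Then for every $p>-1$, as $t\to\infty$, $\int_{\mathbb{R}} |u|^p e^{-tu^2} f(z+uz)\,du \sim f(z)\,\Gamma((p+1)/2)\, t^{-(p+1)/2}$. -/
open Filter MeasureTheory

/-- Lemma 7 (Laplace-type asymptotic): if the density `f` is continuous at
`z > 0` with `f z > 0` and `sup f < ∞`, then for `p > -1`, as `t → ∞`,
`∫ |u|^p e^{-tu²} f(z+uz) du ∼ f(z) Γ((p+1)/2) t^{-(p+1)/2}`. -/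
theorem stmt_10 (f : ℝ → ℝ) (hmeas : Measurable f) (hnonneg : ∀ x, 0 ≤ f x)
    (hdens : ∫ x, f x = 1) (hbdd : ∃ A, ∀ x, f x ≤ A)
    (z : ℝ) (hz : 0 < z) (hcont : ContinuousAt f z) (hfz : 0 < f z)
    (p : ℝ) (hp : -1 < p) :
    Tendsto (fun t : ℝ =>
        (∫ u, |u| ^ p * Real.exp (-t * u ^ 2) * f (z + u * z)) /
          (f z * Real.Gamma ((p + 1) / 2) * t ^ (-((p + 1) / 2))))
      atTop (nhds 1) := by
  set Γp : ℝ := Real.Gamma ((p + 1) / 2) with hΓpdef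
  have hΓ : 0 < Γp := Real.Gamma_pos_of_pos (by linarith)
  set φ : ℝ → ℝ := fun x => |x| ^ p * Real.exp (-x ^ 2) / Γp with hφdef
  set g : ℝ → ℝ := fun u => f (z + u * z) with hgdef
  -- φ is nonnegative
  have hφ0 : ∀ x, 0 ≤ φ x := by
    intro x
    have := Real.rpow_nonneg (abs_nonneg x) p
    positivity
  -- ∫ φ = 1
  have hint : ∫ x : ℝ, |x| ^ p * Real.exp (-x ^ 2) = Γp := by
    have h0 := integral_comp_abs (f := fun y : ℝ => y ^ p * Real.exp (-y ^ 2))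
    simp only [sq_abs] at h0
    rw [h0]
    have h2 : ∫ x in Set.Ioi (0:ℝ), x ^ p * Real.exp (-x ^ 2)
        = ∫ x in Set.Ioi (0:ℝ), x ^ p * Real.exp (-x ^ (2:ℝ)) := by
      refine setIntegral_congr_fun measurableSet_Ioi (fun x hx => ?_)
      rw [← Real.rpow_natCast x 2]; norm_num
    rw [h2, integral_rpow_mul_exp_neg_rpow two_pos hp]
    rw [hΓpdef]; ring
  have h'φ : ∫ x : ℝ, φ x = 1 := by
    simp only [hφdef, div_eq_mul_inv, integral_mul_const, hint]
    exact mul_inv_cancel₀ hΓ.ne'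
  -- decay of the peak function
  have hdecay : Tendsto (fun x : ℝ => ‖x‖ ^ (Module.finrank ℝ ℝ) * φ x)
      (Bornology.cobounded ℝ) (nhds 0) := by
    have hF : Tendsto (fun y : ℝ => y ^ (p+1) * Real.exp (-y ^ 2) / Γp) atTop (nhds 0) := by
      have h1 : Tendsto (fun s : ℝ => s ^ ((p+1)/2) * Real.exp (-1 * s) / Γp) atTop (nhds 0) := by
        simpa using (tendsto_rpow_mul_exp_neg_mul_atTop_nhds_zero ((p+1)/2) 1 one_pos).div_const Γp
      have h2 := h1.comp (tendsto_pow_atTop (n := 2) two_ne_zero)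
      apply h2.congr'
      filter_upwards [eventually_ge_atTop (0:ℝ)] with y hy
      simp only [Function.comp_apply, neg_one_mul]
      congr 2
      rw [← Real.rpow_natCast y 2, ← Real.rpow_mul hy]
      congr 1
      ring
    have h3 := hF.comp (tendsto_norm_cobounded_atTop (E := ℝ))
    apply h3.congr
    intro x
    simp only [Function.comp_apply, Real.norm_eq_abs, Module.finrank_self, pow_one, sq_abs, hφdef]
    rcases eq_or_ne x 0 with rfl | hx
    · simp [Real.zero_rpow (by linarith : p + 1 ≠ 0)]
    · rw [Real.rpow_add_one (abs_ne_zero.2 hx)]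
      ring
  -- g is integrable
  have hfint : Integrable f := integrable_of_integral_eq_one hdens
  have hgint : Integrable g := by
    have h1 : Integrable (fun x : ℝ => f (z + x)) := hfint.comp_add_left z
    exact h1.comp_mul_right' hz.ne'
  -- g is continuous at 0
  have hgcont : ContinuousAt g 0 := by
    have haff : ContinuousAt (fun u : ℝ => z + u * z) 0 := by fun_prop
    show ContinuousAt (f ∘ fun u : ℝ => z + u * z) 0
    exact ContinuousAt.comp_of_eq hcont haff (by simp)
  -- apply the peak-function lemma
  have T := tendsto_integral_comp_smul_smul_of_integrable (μ := volume)
      hφ0 h'φ hdecay hgint hgcont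
  have hg0 : g 0 = f z := by simp [hgdef]
  rw [hg0] at T
  -- compose with sqrt
  have hsqrt : Tendsto Real.sqrt atTop atTop := by
    apply Filter.Tendsto.congr' _ (tendsto_rpow_atTop (by norm_num : (0:ℝ) < 1/2))
    filter_upwards [eventually_ge_atTop (0:ℝ)] with t ht
    rw [Real.sqrt_eq_rpow]
  have T2 := (T.comp hsqrt).div_const (f z)
  rw [div_self hfz.ne'] at T2
  apply T2.congr'
  filter_upwards [eventually_ge_atTop (1:ℝ)] with t ht
  have ht0 : 0 < t := lt_of_lt_of_le one_pos ht
  have hst : 0 < Real.sqrt t := Real.sqrt_pos.2 ht0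
  -- pointwise computation of the rescaled integrand
  have key : (∫ x : ℝ, ((Real.sqrt t) ^ (Module.finrank ℝ ℝ) * φ (Real.sqrt t • x)) • g x)
      = t ^ ((p+1)/2) / Γp * ∫ u : ℝ, |u| ^ p * Real.exp (-t * u ^ 2) * g u := by
    rw [← integral_const_mul]
    congr 1
    funext x
    have h1 : |Real.sqrt t * x| = Real.sqrt t * |x| := by
      rw [abs_mul, abs_of_nonneg (Real.sqrt_nonneg t)]
    have h2 : (Real.sqrt t * x) ^ 2 = t * x ^ 2 := by
      rw [mul_pow, Real.sq_sqrt ht0.le]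
    have h3 : Real.sqrt t * (Real.sqrt t * |x|) ^ p = t ^ ((p+1)/2) * |x| ^ p := by
      rw [Real.mul_rpow (Real.sqrt_nonneg t) (abs_nonneg x)]
      rw [show Real.sqrt t * ((Real.sqrt t) ^ p * |x| ^ p)
          = ((Real.sqrt t) ^ p * Real.sqrt t) * |x| ^ p by ring]
      rw [← Real.rpow_add_one hst.ne']
      rw [Real.sqrt_eq_rpow, ← Real.rpow_mul ht0.le]
      congr 2
      ring
    have h4 := h3
    rw [Real.mul_rpow (Real.sqrt_nonneg t) (abs_nonneg x)] at h4
    simp only [Module.finrank_self, pow_one, smul_eq_mul, hφdef, h1, h2,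
      Real.mul_rpow (Real.sqrt_nonneg t) (abs_nonneg x), neg_mul]
    linear_combination (Real.exp (-(t * x ^ 2)) * g x / Γp) * h4
  simp only [Function.comp_apply]
  rw [key]
  simp only [hgdef]
  rw [Real.rpow_neg ht0.le]
  have hrp : (0:ℝ) < t ^ ((p+1)/2) := Real.rpow_pos_of_pos ht0 _
  field_simp
end

section
/- Fix $z>0$ with $f$ continuous and nonzero at $z$ and $\sup f<\infty$. Define $h(t) = \log[z\int e^{-tu^2} f(z+zu)\,du]$ for $t\ge 0$. Then $h$ is finite, $h'(t)<0$, $h''(t)>0$ for $t>0$, and $h'(t) \sim -(2t)^{-1}$ as $t\to\infty$. -/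
open Filter MeasureTheory

namespace Stmt11Aux

open Real Set

noncomputable def mom (g : ℝ → ℝ) (n : ℕ) (t : ℝ) : ℝ :=
  ∫ u, u ^ n * Real.exp (-t * u ^ 2) * g u

lemma integrable_pow_exp {b : ℝ} (hb : 0 < b) (n : ℕ) :
    Integrable fun x : ℝ => x ^ n * Real.exp (-b * x ^ 2) := by
  have h := integrable_rpow_mul_exp_neg_mul_sq hb (s := (n : ℝ))
    (lt_of_lt_of_le (by norm_num) (Nat.cast_nonneg n))
  simpa [Real.rpow_natCast] using h

variable {g : ℝ → ℝ} {A : ℝ}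

lemma meas_integrand (hg : Measurable g) (n : ℕ) (t : ℝ) :
    AEStronglyMeasurable (fun u : ℝ => u ^ n * Real.exp (-t * u ^ 2) * g u) volume :=
  (((measurable_id.pow_const n).mul
    (((measurable_id.pow_const 2).const_mul (-t)).exp)).mul hg).aestronglyMeasurable

lemma integrable_mom (hg : Measurable g) (h0 : ∀ x, 0 ≤ g x) (hA : ∀ x, g x ≤ A)
    {t : ℝ} (ht : 0 < t) (n : ℕ) :
    Integrable fun u : ℝ => u ^ n * Real.exp (-t * u ^ 2) * g u := by
  refine Integrable.mono' ((integrable_pow_exp ht n).abs.const_mul A)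
    (meas_integrand hg n t) ?_
  filter_upwards with u
  rw [Real.norm_eq_abs, abs_mul, abs_of_nonneg (h0 u), mul_comm A]
  exact mul_le_mul_of_nonneg_left (hA u) (abs_nonneg _)

lemma hasDerivAt_mom (hg : Measurable g) (h0 : ∀ x, 0 ≤ g x) (hA : ∀ x, g x ≤ A)
    {t : ℝ} (ht : 0 < t) (n : ℕ) :
    HasDerivAt (mom g n) (-mom g (n + 2) t) t := by
  have key := hasDerivAt_integral_of_dominated_loc_of_deriv_le (μ := volume)
      (F := fun (s : ℝ) (u : ℝ) => u ^ n * Real.exp (-s * u ^ 2) * g u)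
      (F' := fun (s : ℝ) (u : ℝ) => -(u ^ (n + 2) * Real.exp (-s * u ^ 2) * g u))
      (x₀ := t)
      (bound := fun u => A * |u ^ (n + 2) * Real.exp (-(t / 2) * u ^ 2)|)
      (Metric.ball_mem_nhds t (half_pos ht))
      (Eventually.of_forall fun s => meas_integrand hg n s)
      (integrable_mom hg h0 hA ht n)
      ((meas_integrand hg (n + 2) t).neg)
      ?_ ((integrable_pow_exp (half_pos ht) (n + 2)).abs.const_mul A) ?_
  · have h2 := key.2
    rw [integral_neg] at h2
    exact h2
  · apply ae_of_all
    intro u s hs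
    rw [Metric.mem_ball, Real.dist_eq] at hs
    have hs2 : t / 2 ≤ s := by
      have := abs_lt.1 hs
      linarith [this.1]
    rw [norm_neg, Real.norm_eq_abs]
    show |u ^ (n + 2) * Real.exp (-s * u ^ 2) * g u|
        ≤ A * |u ^ (n + 2) * Real.exp (-(t / 2) * u ^ 2)|
    rw [abs_mul, abs_mul, abs_of_nonneg (h0 u), abs_of_nonneg (Real.exp_pos _).le,
      abs_mul, abs_of_nonneg (Real.exp_pos _).le, mul_comm A]
    have he : Real.exp (-s * u ^ 2) ≤ Real.exp (-(t / 2) * u ^ 2) := by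
      apply Real.exp_le_exp.2
      apply mul_le_mul_of_nonneg_right _ (sq_nonneg u)
      linarith
    exact mul_le_mul (mul_le_mul_of_nonneg_left he (abs_nonneg _)) (hA u) (h0 u)
      (by positivity)
  · apply ae_of_all
    intro u s hs
    have h1 : HasDerivAt (fun s : ℝ => -s * u ^ 2) (-u ^ 2) s := by
      simpa using ((hasDerivAt_id s).neg.mul_const (u ^ 2))
    have h2 := (((h1.exp).const_mul (u ^ n)).mul_const (g u))
    refine h2.congr_deriv ?_
    ring

lemma exists_delta (hc : ContinuousAt g 0) (hg0 : 0 < g 0) :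
    ∃ δ > (0 : ℝ), ∀ u : ℝ, |u| < δ → 0 < g u := by
  have hev : ∀ᶠ u in nhds (0 : ℝ), 0 < g u := hc.eventually (eventually_gt_nhds hg0)
  rw [Metric.eventually_nhds_iff] at hev
  obtain ⟨δ, hδpos, hδ⟩ := hev
  exact ⟨δ, hδpos, fun u hu => hδ (by simpa [Real.dist_eq] using hu)⟩

lemma integral_pos_of_delta {φ : ℝ → ℝ} (hφ : Integrable φ) (h0 : ∀ u, 0 ≤ φ u)
    {δ : ℝ} (hδ : 0 < δ) {x : ℝ}
    (hsupp : ∀ u ∈ Ioo (0 : ℝ) δ, u ≠ x → φ u ≠ 0) :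
    0 < ∫ u, φ u := by
  rw [integral_pos_iff_support_of_nonneg h0 hφ]
  have hsub : Ioo (0 : ℝ) δ \ {x} ⊆ Function.support φ := by
    rintro u ⟨hu, hux⟩
    exact hsupp u hu (by simpa using hux)
  calc (0 : ENNReal) < volume (Ioo (0 : ℝ) δ \ {x}) := by
        rw [measure_diff_null (measure_singleton x)]
        simp [hδ]
    _ ≤ volume (Function.support φ) := measure_mono hsub

lemma mom_pos (hg : Measurable g) (h0 : ∀ x, 0 ≤ g x) (hA : ∀ x, g x ≤ A)
    (hc : ContinuousAt g 0) (hg0 : 0 < g 0) {t : ℝ} (ht : 0 < t) {n : ℕ} (hn : Even n) :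
    0 < mom g n t := by
  obtain ⟨δ, hδpos, hδ⟩ := exists_delta hc hg0
  refine integral_pos_of_delta (integrable_mom hg h0 hA ht n) ?_ hδpos (x := -1) ?_
  · intro u
    exact mul_nonneg (mul_nonneg (hn.pow_nonneg u) (Real.exp_pos _).le) (h0 u)
  · intro u hu _
    have h1 : 0 < g u := hδ u (by rw [abs_of_pos hu.1]; exact hu.2)
    have h2 : 0 < u ^ n := pow_pos hu.1 n
    positivity

lemma var_pos (hg : Measurable g) (h0 : ∀ x, 0 ≤ g x) (hA : ∀ x, g x ≤ A)
    (hc : ContinuousAt g 0) (hg0 : 0 < g 0) {t : ℝ} (ht : 0 < t) :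
    mom g 2 t ^ 2 < mom g 4 t * mom g 0 t := by
  obtain ⟨δ, hδpos, hδ⟩ := exists_delta hc hg0
  set c : ℝ := mom g 2 t / mom g 0 t with hc_def
  have h0pos : 0 < mom g 0 t := mom_pos hg h0 hA hc hg0 ht Even.zero
  have hint4 := integrable_mom hg h0 hA ht 4
  have hint2 := integrable_mom hg h0 hA ht 2
  have hint0 := integrable_mom hg h0 hA ht 0
  have heq : (fun u : ℝ => (u ^ 2 - c) ^ 2 * Real.exp (-t * u ^ 2) * g u)
      = fun u : ℝ => (u ^ 4 * Real.exp (-t * u ^ 2) * g u)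
        - (2 * c) * (u ^ 2 * Real.exp (-t * u ^ 2) * g u)
        + c ^ 2 * (u ^ 0 * Real.exp (-t * u ^ 2) * g u) := by
    funext u; ring
  have hintv : Integrable (fun u : ℝ => (u ^ 2 - c) ^ 2 * Real.exp (-t * u ^ 2) * g u) := by
    rw [heq]
    exact (hint4.sub (hint2.const_mul _)).add (hint0.const_mul _)
  have hpos : 0 < ∫ u, (u ^ 2 - c) ^ 2 * Real.exp (-t * u ^ 2) * g u := by
    refine integral_pos_of_delta hintv ?_ hδpos (x := Real.sqrt c) ?_
    · intro u
      exact mul_nonneg (mul_nonneg (sq_nonneg _) (Real.exp_pos _).le) (h0 u)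
    · intro u hu hux
      have h1 : 0 < g u := hδ u (by rw [abs_of_pos hu.1]; exact hu.2)
      have h2 : u ^ 2 - c ≠ 0 := by
        intro hcon
        apply hux
        have : u ^ 2 = c := by linarith
        rw [← this, Real.sqrt_sq hu.1.le]
      positivity
  have hval : ∫ u, (u ^ 2 - c) ^ 2 * Real.exp (-t * u ^ 2) * g u
      = mom g 4 t - 2 * c * mom g 2 t + c ^ 2 * mom g 0 t := by
    have iB : Integrable (fun u : ℝ => 2 * c * (u ^ 2 * Real.exp (-t * u ^ 2) * g u)) :=
      hint2.const_mul _
    have iC : Integrable (fun u : ℝ => c ^ 2 * (u ^ 0 * Real.exp (-t * u ^ 2) * g u)) :=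
      hint0.const_mul _
    have iA : Integrable (fun u : ℝ => u ^ 4 * Real.exp (-t * u ^ 2) * g u
        - 2 * c * (u ^ 2 * Real.exp (-t * u ^ 2) * g u)) := hint4.sub iB
    rw [heq, integral_add iA iC, integral_sub hint4 iB, integral_const_mul, integral_const_mul]
    rw [mom, mom, mom]
  rw [hval, hc_def] at hpos
  have h2 : 0 < (mom g 4 t - 2 * (mom g 2 t / mom g 0 t) * mom g 2 t
      + (mom g 2 t / mom g 0 t) ^ 2 * mom g 0 t) * mom g 0 t := mul_pos hpos h0pos
  have h3 : (mom g 4 t - 2 * (mom g 2 t / mom g 0 t) * mom g 2 t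
      + (mom g 2 t / mom g 0 t) ^ 2 * mom g 0 t) * mom g 0 t
      = mom g 4 t * mom g 0 t - mom g 2 t ^ 2 := by
    field_simp
    ring
  rw [h3] at h2
  linarith

lemma scaled_eq (n : ℕ) {t : ℝ} (ht : 0 < t) :
    (∫ v, v ^ n * Real.exp (-(1:ℝ) * v ^ 2) * g ((Real.sqrt t)⁻¹ * v))
      = Real.sqrt t ^ (n + 1) * mom g n t := by
  have hst : 0 < Real.sqrt t := Real.sqrt_pos.2 ht
  set a : ℝ := (Real.sqrt t)⁻¹ with ha
  have key := MeasureTheory.Measure.integral_comp_mul_left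
    (fun u : ℝ => u ^ n * Real.exp (-t * u ^ 2) * g u) a
  have hptw : ∀ v : ℝ, v ^ n * Real.exp (-(1:ℝ) * v ^ 2) * g (a * v)
      = Real.sqrt t ^ n * ((a * v) ^ n * Real.exp (-t * (a * v) ^ 2) * g (a * v)) := by
    intro v
    have h2 : -t * (a * v) ^ 2 = -(1:ℝ) * v ^ 2 := by
      rw [mul_pow, ha]
      have hsq : Real.sqrt t ^ 2 = t := Real.sq_sqrt ht.le
      field_simp
      rw [hsq]
    have h3 : Real.sqrt t ^ n * (a * v) ^ n = v ^ n := by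
      rw [mul_pow, ha, ← mul_assoc, ← mul_pow, mul_inv_cancel₀ hst.ne']
      simp
    rw [h2, ← mul_assoc, ← mul_assoc, h3]
  calc (∫ v, v ^ n * Real.exp (-(1:ℝ) * v ^ 2) * g (a * v))
      = ∫ v, Real.sqrt t ^ n * ((a * v) ^ n * Real.exp (-t * (a * v) ^ 2) * g (a * v)) := by
        congr 1; funext v; exact hptw v
    _ = Real.sqrt t ^ n * ∫ v, (a * v) ^ n * Real.exp (-t * (a * v) ^ 2) * g (a * v) :=
        integral_const_mul _ _
    _ = Real.sqrt t ^ n * (|a⁻¹| • ∫ u, u ^ n * Real.exp (-t * u ^ 2) * g u) := by rw [key]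
    _ = Real.sqrt t ^ (n + 1) * mom g n t := by
        rw [ha, inv_inv, abs_of_pos hst, smul_eq_mul, mom, pow_succ]
        ring

lemma tendsto_sqrt_inv_mul (v : ℝ) :
    Tendsto (fun t : ℝ => (Real.sqrt t)⁻¹ * v) atTop (nhds 0) := by
  have hs : Tendsto Real.sqrt atTop atTop := by
    apply tendsto_atTop_atTop.2
    intro b
    refine ⟨(max b 0) ^ 2, fun a ha => le_trans (le_max_left b 0) ?_⟩
    rw [← Real.sqrt_sq (le_max_right b 0)]
    exact Real.sqrt_le_sqrt ha
  have := (tendsto_inv_atTop_zero.comp hs).mul_const v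
  simpa using this

lemma tendsto_scaled (hg : Measurable g) (h0 : ∀ x, 0 ≤ g x) (hA : ∀ x, g x ≤ A)
    (hc : ContinuousAt g 0) (n : ℕ) :
    Tendsto (fun t : ℝ => ∫ v, v ^ n * Real.exp (-(1:ℝ) * v ^ 2) * g ((Real.sqrt t)⁻¹ * v))
      atTop (nhds ((∫ v : ℝ, v ^ n * Real.exp (-(1:ℝ) * v ^ 2)) * g 0)) := by
  have hval : (∫ v : ℝ, v ^ n * Real.exp (-(1:ℝ) * v ^ 2)) * g 0
      = ∫ v : ℝ, v ^ n * Real.exp (-(1:ℝ) * v ^ 2) * g 0 := (integral_mul_const _ _).symm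
  rw [hval]
  apply tendsto_integral_filter_of_dominated_convergence
    (bound := fun v => A * |v ^ n * Real.exp (-(1:ℝ) * v ^ 2)|)
  · exact Eventually.of_forall fun s =>
      (((measurable_id.pow_const n).mul
        (((measurable_id.pow_const 2).const_mul (-(1:ℝ))).exp)).mul
        (hg.comp (measurable_const.mul measurable_id))).aestronglyMeasurable
  · apply Eventually.of_forall
    intro s
    apply ae_of_all
    intro v
    rw [Real.norm_eq_abs, abs_mul, abs_of_nonneg (h0 _), mul_comm A]
    exact mul_le_mul_of_nonneg_left (hA _) (abs_nonneg _)
  · exact (integrable_pow_exp one_pos n).abs.const_mul A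
  · apply ae_of_all
    intro v
    exact Tendsto.const_mul _ (hc.tendsto.comp (tendsto_sqrt_inv_mul v))

lemma C0_val : (∫ v : ℝ, v ^ 0 * Real.exp (-(1:ℝ) * v ^ 2)) = Real.sqrt π := by
  simp only [pow_zero, one_mul]
  rw [integral_gaussian]
  simp

lemma C2_val : (∫ v : ℝ, v ^ 2 * Real.exp (-(1:ℝ) * v ^ 2)) = Real.sqrt π / 2 := by
  have hD1 : HasDerivAt (mom (fun _ => (1:ℝ)) 0) (-mom (fun _ => (1:ℝ)) 2 1) 1 :=
    hasDerivAt_mom (A := 1) measurable_const (fun _ => zero_le_one) (fun _ => le_refl 1)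
      one_pos 0
  have heq : mom (fun _ => (1:ℝ)) 0 = fun s => Real.sqrt π / Real.sqrt s := by
    funext s
    rw [mom]
    simp only [pow_zero, one_mul, mul_one]
    rw [integral_gaussian, Real.sqrt_div pi_pos.le]
  have hD2 : HasDerivAt (fun s => Real.sqrt π / Real.sqrt s) (-(Real.sqrt π / 2)) 1 := by
    have h1 : HasDerivAt Real.sqrt (1 / (2 * Real.sqrt 1)) 1 :=
      Real.hasDerivAt_sqrt one_ne_zero
    have h2 : HasDerivAt (fun s : ℝ => (Real.sqrt s)⁻¹)
        (-(1 / (2 * Real.sqrt 1)) / (Real.sqrt 1) ^ 2) 1 := h1.inv (by simp)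
    have h3 := h2.const_mul (Real.sqrt π)
    have h4 : (fun s : ℝ => Real.sqrt π * (Real.sqrt s)⁻¹)
        = fun s => Real.sqrt π / Real.sqrt s := by
      funext s; rw [div_eq_mul_inv]
    rw [h4] at h3
    refine h3.congr_deriv ?_
    rw [Real.sqrt_one]
    ring
  rw [heq] at hD1
  have := hD1.unique hD2
  have h5 : mom (fun _ => (1:ℝ)) 2 1 = Real.sqrt π / 2 := by linarith
  rw [← h5, mom]
  simp only [mul_one]

end Stmt11Aux

open Stmt11Aux

/-- Properties of `h(t) = log(z ∫ e^{-tu²} f(z+zu) du)`: it is finite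
(the defining integral converges), `h' < 0`, `h'' > 0` on `(0,∞)`, and
`h'(t) ∼ -(2t)⁻¹` as `t → ∞`. -/
theorem stmt_11 (f : ℝ → ℝ) (hmeas : Measurable f) (hnonneg : ∀ x, 0 ≤ f x)
    (hdens : ∫ x, f x = 1) (hbdd : ∃ A, ∀ x, f x ≤ A)
    (z : ℝ) (hz : 0 < z) (hcont : ContinuousAt f z) (hfz : 0 < f z)
    (h : ℝ → ℝ)
    (hdef : ∀ t, h t = Real.log (z * ∫ u, Real.exp (-t * u ^ 2) * f (z + z * u))) :
    (∀ t ≥ (0 : ℝ), Integrable (fun u => Real.exp (-t * u ^ 2) * f (z + z * u))) ∧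
    ∃ h' h'' : ℝ → ℝ,
      (∀ t > (0 : ℝ), HasDerivAt h (h' t) t) ∧
      (∀ t > (0 : ℝ), HasDerivAt h' (h'' t) t) ∧
      (∀ t > (0 : ℝ), h' t < 0 ∧ 0 < h'' t) ∧
      Tendsto (fun t => h' t / (-(2 * t)⁻¹)) atTop (nhds 1) := by
  obtain ⟨A, hA⟩ := hbdd
  set G : ℝ → ℝ := fun u => f (z + z * u) with hGdef
  have hGmeas : Measurable G :=
    hmeas.comp (measurable_const.add (measurable_const.mul measurable_id))
  have hG0 : ∀ x, 0 ≤ G x := fun x => hnonneg _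
  have hGA : ∀ x, G x ≤ A := fun x => hA _
  have hGcont : ContinuousAt G 0 := by
    have h1 : ContinuousAt (fun u : ℝ => z + z * u) 0 :=
      continuousAt_const.add (continuousAt_const.mul continuousAt_id)
    have h2 : ContinuousAt f ((fun u : ℝ => z + z * u) 0) := by simpa using hcont
    exact ContinuousAt.comp h2 h1
  have hGz : 0 < G 0 := by simpa [hGdef] using hfz
  have hfInt : Integrable f := by
    by_contra hcon
    rw [integral_undef hcon] at hdens
    norm_num at hdens
  have hGInt : Integrable G := by
    have h1 : Integrable fun x : ℝ => f (z + x) := hfInt.comp_add_left z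
    exact h1.comp_mul_left' hz.ne'
  have part1 : ∀ t ≥ (0 : ℝ), Integrable fun u : ℝ => Real.exp (-t * u ^ 2) * G u := by
    intro t ht
    refine hGInt.mono'
      ((Real.measurable_exp.comp ((measurable_id.pow_const 2).const_mul (-t))).mul
        hGmeas).aestronglyMeasurable ?_
    filter_upwards with u
    rw [Real.norm_eq_abs, abs_mul, abs_of_nonneg (hG0 u), abs_of_nonneg (Real.exp_pos _).le]
    calc Real.exp (-t * u ^ 2) * G u ≤ 1 * G u := by
          apply mul_le_mul_of_nonneg_right _ (hG0 u)
          rw [Real.exp_le_one_iff]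
          exact mul_nonpos_of_nonpos_of_nonneg (neg_nonpos.2 ht) (sq_nonneg u)
      _ = G u := one_mul _
  have hM0pos : ∀ t > (0:ℝ), 0 < mom G 0 t :=
    fun t ht => mom_pos hGmeas hG0 hGA hGcont hGz ht Even.zero
  have hM2pos : ∀ t > (0:ℝ), 0 < mom G 2 t :=
    fun t ht => mom_pos hGmeas hG0 hGA hGcont hGz ht ⟨1, rfl⟩
  refine ⟨part1, fun t => -(mom G 2 t / mom G 0 t),
    fun t => (mom G 4 t * mom G 0 t - mom G 2 t ^ 2) / mom G 0 t ^ 2, ?_, ?_, ?_, ?_⟩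
  · intro t ht
    have hfun : h = fun s => Real.log (z * mom G 0 s) := by
      funext s
      rw [hdef s, mom]
      simp only [pow_zero, one_mul]
      rfl
    rw [hfun]
    have d0 := hasDerivAt_mom hGmeas hG0 hGA ht 0
    have hne : z * mom G 0 t ≠ 0 := (mul_pos hz (hM0pos t ht)).ne'
    have hld := (d0.const_mul z).log hne
    convert hld using 1
    rw [mul_comm z (-mom G (0 + 2) t)]
    show -(mom G 2 t / mom G 0 t) = -mom G (0 + 2) t * z / (z * mom G 0 t)
    rw [zero_add]
    field_simp [(hM0pos t ht).ne']
  · intro t ht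
    have d2 := hasDerivAt_mom hGmeas hG0 hGA ht 2
    have d0 := hasDerivAt_mom hGmeas hG0 hGA ht 0
    have hne := (hM0pos t ht).ne'
    have hld := (d2.div d0 hne).neg
    refine hld.congr_deriv ?_
    have h22 : mom G (2 + 2) t = mom G 4 t := by norm_num
    have h02 : mom G (0 + 2) t = mom G 2 t := by norm_num
    rw [h22, h02]
    field_simp
    ring
  · intro t ht
    refine ⟨neg_lt_zero.2 (div_pos (hM2pos t ht) (hM0pos t ht)), ?_⟩
    exact div_pos (sub_pos.2 (var_pos hGmeas hG0 hGA hGcont hGz ht))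
      (pow_pos (hM0pos t ht) 2)
  · have l2 := tendsto_scaled hGmeas hG0 hGA hGcont 2
    have l0 := tendsto_scaled hGmeas hG0 hGA hGcont 0
    have hπ : Real.sqrt Real.pi ≠ 0 := (Real.sqrt_pos.2 Real.pi_pos).ne'
    have hden : (∫ v : ℝ, v ^ 0 * Real.exp (-(1:ℝ) * v ^ 2)) * G 0 ≠ 0 := by
      rw [C0_val]
      exact mul_ne_zero hπ hGz.ne'
    have hlim := (l2.const_mul 2).div l0 hden
    have hval : 2 * ((∫ v : ℝ, v ^ 2 * Real.exp (-(1:ℝ) * v ^ 2)) * G 0)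
        / ((∫ v : ℝ, v ^ 0 * Real.exp (-(1:ℝ) * v ^ 2)) * G 0) = 1 := by
      rw [C0_val, C2_val]
      field_simp
    rw [hval] at hlim
    refine Filter.Tendsto.congr' ?_ hlim
    filter_upwards [eventually_gt_atTop 0] with t ht
    simp only [Pi.div_apply]
    rw [scaled_eq 2 ht, scaled_eq 0 ht]
    have hst : 0 < Real.sqrt t := Real.sqrt_pos.2 ht
    have hM0 := hM0pos t ht
    have hsq : Real.sqrt t ^ 2 = t := Real.sq_sqrt ht.le
    have h3 : Real.sqrt t ^ (2 + 1) = t * Real.sqrt t := by rw [pow_succ, hsq]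
    have h1 : Real.sqrt t ^ (0 + 1) = Real.sqrt t := by rw [zero_add, pow_one]
    rw [h3, h1]
    show 2 * (t * Real.sqrt t * mom G 2 t) / (Real.sqrt t * mom G 0 t)
        = -(mom G 2 t / mom G 0 t) / (-(2 * t)⁻¹)
    rw [neg_div_neg_eq]
    rw [div_eq_div_iff (by positivity) (by positivity)]
    field_simp
end

section
/- With $h$ as above ($z>0$ fixed, $f$ continuous and positive at $z$, $\sup f<\infty$), if $\sigma_n\to 0$ then for all large $n$ there is a unique $t_n>0$ with $h'(t_n) = -\sigma_n^2$; moreover $t_n \sim 1/(2\sigma_n^2)$ and $h(t_n) = \log\sigma_n + \log[\sqrt{2\pi}\, z f(z)] + o(1)$ as $n\to\infty$. -/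
open Filter MeasureTheory

namespace Stmt12Aux

open Set Real Metric

variable {f : ℝ → ℝ} {z A : ℝ}

theorem meas_aux (hmeas : Measurable f) (k : ℕ) (t : ℝ) :
    Measurable fun u : ℝ => u ^ k * Real.exp (-t * u ^ 2) * f (z + z * u) :=
  (((measurable_id.pow_const k).mul
    (((measurable_id.pow_const 2).const_mul (-t)).exp)).mul
    (hmeas.comp (measurable_const.add (measurable_id.const_mul z))))

theorem integrable_pow_gauss {t : ℝ} (ht : 0 < t) (k : ℕ) :
    Integrable fun u : ℝ => |u| ^ k * Real.exp (-t * u ^ 2) := by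
  have h := integrable_rpow_mul_exp_neg_mul_sq ht
    (neg_one_lt_zero.trans_le (Nat.cast_nonneg k))
  have h2 : Integrable fun u : ℝ => u ^ k * Real.exp (-t * u ^ 2) := by
    simpa [Real.rpow_natCast] using h
  refine h2.abs.congr ?_
  filter_upwards with u
  rw [abs_mul, abs_of_nonneg (Real.exp_pos _).le, abs_pow]

theorem integrable_aux (hmeas : Measurable f) (hnonneg : ∀ x, 0 ≤ f x)
    (hA : ∀ x, f x ≤ A) (k : ℕ) {t : ℝ} (ht : 0 < t) :
    Integrable fun u : ℝ => u ^ k * Real.exp (-t * u ^ 2) * f (z + z * u) := by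
  refine Integrable.mono' ((integrable_pow_gauss ht k).const_mul A)
    (meas_aux hmeas k t).aestronglyMeasurable ?_
  filter_upwards with u
  have h1 : 0 ≤ f (z + z * u) := hnonneg _
  have h2 : f (z + z * u) ≤ A := hA _
  have heq : ‖u ^ k * Real.exp (-t * u ^ 2) * f (z + z * u)‖
      = |u| ^ k * Real.exp (-t * u ^ 2) * f (z + z * u) := by
    rw [Real.norm_eq_abs, abs_mul, abs_mul, abs_pow,
      abs_of_nonneg (Real.exp_pos _).le, abs_of_nonneg h1]
  rw [heq]
  have hnn : 0 ≤ |u| ^ k * Real.exp (-t * u ^ 2) := by positivity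
  calc |u| ^ k * Real.exp (-t * u ^ 2) * f (z + z * u)
      ≤ |u| ^ k * Real.exp (-t * u ^ 2) * A := mul_le_mul_of_nonneg_left h2 hnn
    _ = A * (|u| ^ k * Real.exp (-t * u ^ 2)) := by ring

theorem delta_aux (hcont : ContinuousAt f z) (hfz : 0 < f z) :
    ∃ δ > 0, ∀ u : ℝ, |u| < δ → f z / 2 ≤ f (z + z * u) := by
  have h1 : ∀ᶠ x in nhds z, f z / 2 < f x :=
    hcont.eventually (eventually_gt_nhds (by linarith))
  have h2 : Tendsto (fun u : ℝ => z + z * u) (nhds 0) (nhds z) := by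
    have h3 : Tendsto (fun u : ℝ => z + z * u) (nhds 0) (nhds (z + z * 0)) :=
      (tendsto_id.const_mul z).const_add z
    simpa using h3
  have h3 : ∀ᶠ u in nhds (0 : ℝ), f z / 2 < f (z + z * u) := h2.eventually h1
  rw [Metric.eventually_nhds_iff] at h3
  obtain ⟨δ, hδ, hδ'⟩ := h3
  exact ⟨δ, hδ, fun u hu => le_of_lt (hδ' (by simpa [Real.dist_eq] using hu))⟩

theorem M_pos (hnonneg : ∀ x, 0 ≤ f x)
    {δ : ℝ} (hδ : 0 < δ) (hδ' : ∀ u : ℝ, |u| < δ → f z / 2 ≤ f (z + z * u))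
    (hfz : 0 < f z) {k : ℕ} (hk : Even k) {t0 : ℝ} (ht : 0 < t0)
    (hint : Integrable fun u : ℝ => u ^ k * Real.exp (-t0 * u ^ 2) * f (z + z * u)) :
    0 < ∫ u, u ^ k * Real.exp (-t0 * u ^ 2) * f (z + z * u) := by
  set g : ℝ → ℝ := fun u => u ^ k * Real.exp (-t0 * u ^ 2) * f (z + z * u) with hg
  set c : ℝ := (δ / 2) ^ k * Real.exp (-t0 * δ ^ 2) * (f z / 2) with hc
  have hcpos : 0 < c := by positivity
  set s : Set ℝ := Ioo (δ / 2) δ with hs_def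
  have hs : MeasurableSet s := measurableSet_Ioo
  have hμs : volume s ≠ ⊤ := measure_Ioo_lt_top.ne
  have hlb : ∀ u ∈ s, c ≤ g u := by
    intro u hu
    obtain ⟨hu1, hu2⟩ := hu
    have hu0 : 0 < u := lt_trans (by linarith) hu1
    have e1 : (δ / 2) ^ k ≤ u ^ k := pow_le_pow_left₀ (by linarith) hu1.le k
    have e2 : Real.exp (-t0 * δ ^ 2) ≤ Real.exp (-t0 * u ^ 2) := by
      apply Real.exp_le_exp.mpr
      have e0 : u ^ 2 ≤ δ ^ 2 := by nlinarith
      nlinarith [mul_nonneg ht.le (sub_nonneg.mpr e0)]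
    have e3 : f z / 2 ≤ f (z + z * u) := hδ' u (by rw [abs_of_pos hu0]; exact hu2)
    exact mul_le_mul (mul_le_mul e1 e2 (Real.exp_pos _).le (pow_nonneg hu0.le k)) e3
      (by linarith) (by positivity)
  have h1 : c * (volume s).toReal ≤ ∫ u in s, g u :=
    setIntegral_ge_of_const_le_real hs hμs hlb hint.integrableOn
  have h2 : (∫ u in s, g u) ≤ ∫ u, g u := by
    apply setIntegral_le_integral hint
    filter_upwards with u
    have hk0 : 0 ≤ u ^ k := hk.pow_nonneg u
    have hf0 := hnonneg (z + z * u)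
    positivity
  have h3 : (volume s).toReal = δ / 2 := by
    rw [hs_def, Real.volume_Ioo]
    rw [ENNReal.toReal_ofReal (by linarith)]
    ring
  have h4 : 0 < c * (volume s).toReal := by rw [h3]; positivity
  linarith

theorem hasDerivAt_M (hmeas : Measurable f) (hnonneg : ∀ x, 0 ≤ f x)
    (hA : ∀ x, f x ≤ A) (k : ℕ) {t : ℝ} (ht : 0 < t) :
    HasDerivAt (fun x => ∫ u, u ^ k * Real.exp (-x * u ^ 2) * f (z + z * u))
      (-∫ u, u ^ (k + 2) * Real.exp (-t * u ^ 2) * f (z + z * u)) t := by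
  have hA0 : 0 ≤ A := le_trans (hnonneg z) (hA z)
  have key := hasDerivAt_integral_of_dominated_loc_of_deriv_le
    (F := fun x (u : ℝ) => u ^ k * Real.exp (-x * u ^ 2) * f (z + z * u))
    (F' := fun x (u : ℝ) => -(u ^ (k + 2) * Real.exp (-x * u ^ 2) * f (z + z * u)))
    (x₀ := t) (s := ball t (t / 2))
    (bound := fun u => A * (|u| ^ (k + 2) * Real.exp (-(t / 2) * u ^ 2)))
    (ball_mem_nhds _ (by linarith))
    (Eventually.of_forall fun x => (meas_aux hmeas k x).aestronglyMeasurable)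
    (integrable_aux hmeas hnonneg hA k ht)
    ((meas_aux hmeas (k + 2) t).neg.aestronglyMeasurable)
    ?_ ?_ ?_
  · refine key.2.congr_deriv (Eq.symm ?_)
    rw [integral_neg]
  · filter_upwards with u
    intro x hx
    rw [mem_ball, Real.dist_eq, abs_sub_lt_iff] at hx
    have hx2 : t / 2 < x := by linarith [hx.2]
    have h1 : 0 ≤ f (z + z * u) := hnonneg _
    have heb : Real.exp (-x * u ^ 2) ≤ Real.exp (-(t / 2) * u ^ 2) := by
      apply Real.exp_le_exp.mpr
      nlinarith [sq_nonneg u]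
    rw [norm_neg, Real.norm_eq_abs, abs_mul, abs_mul, abs_pow,
      abs_of_nonneg (Real.exp_pos _).le, abs_of_nonneg h1]
    calc |u| ^ (k + 2) * Real.exp (-x * u ^ 2) * f (z + z * u)
        ≤ |u| ^ (k + 2) * Real.exp (-(t / 2) * u ^ 2) * A := by
          apply mul_le_mul (mul_le_mul_of_nonneg_left heb (by positivity)) (hA _) h1
          positivity
      _ = A * (|u| ^ (k + 2) * Real.exp (-(t / 2) * u ^ 2)) := by ring
  · exact (integrable_pow_gauss (by linarith : (0:ℝ) < t / 2) (k + 2)).const_mul A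
  · filter_upwards with u
    intro x _
    have h1 : HasDerivAt (fun x : ℝ => -x * u ^ 2) (-u ^ 2) x := by
      simpa using ((hasDerivAt_id x).neg.mul_const (u ^ 2))
    have h2 := ((h1.exp.const_mul (u ^ k)).mul_const (f (z + z * u)))
    refine h2.congr_deriv (Eq.symm ?_)
    rw [pow_add]
    ring

theorem gauss_two : (∫ x : ℝ, x ^ 2 * Real.exp (-x ^ 2)) = Real.sqrt π / 2 := by
  have hmeas : ∀ b : ℝ, Measurable fun x : ℝ => Real.exp (-b * x ^ 2) := fun b =>
    (((measurable_id.pow_const 2).const_mul (-b)).exp)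
  have key := hasDerivAt_integral_of_dominated_loc_of_deriv_le
    (F := fun (b : ℝ) (x : ℝ) => Real.exp (-b * x ^ 2))
    (F' := fun (b : ℝ) (x : ℝ) => -(x ^ 2 * Real.exp (-b * x ^ 2)))
    (x₀ := (1 : ℝ)) (s := ball 1 (1 / 2))
    (bound := fun x => |x| ^ 2 * Real.exp (-(1 / 2) * x ^ 2))
    (ball_mem_nhds _ (by norm_num))
    (Eventually.of_forall fun b => (hmeas b).aestronglyMeasurable)
    (integrable_exp_neg_mul_sq one_pos)
    (((measurable_id.pow_const 2).mul (hmeas 1)).neg.aestronglyMeasurable)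
    ?_ ?_ ?_
  · have hG : HasDerivAt (fun b : ℝ => ∫ x : ℝ, Real.exp (-b * x ^ 2))
        (-∫ x : ℝ, x ^ 2 * Real.exp (-1 * x ^ 2)) 1 := by
      refine key.2.congr_deriv (Eq.symm ?_)
      rw [integral_neg]
    have hG2 : HasDerivAt (fun b : ℝ => ∫ x : ℝ, Real.exp (-b * x ^ 2))
        (-(Real.sqrt π / 2)) 1 := by
      have heq : (fun b : ℝ => Real.sqrt π * (Real.sqrt b)⁻¹)
          =ᶠ[nhds (1 : ℝ)] fun b : ℝ => ∫ x : ℝ, Real.exp (-b * x ^ 2) := by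
        filter_upwards [isOpen_Ioi.mem_nhds (show (0:ℝ) < 1 by norm_num)] with b hb
        rw [integral_gaussian, Real.sqrt_div Real.pi_pos.le, div_eq_mul_inv]
      have hd : HasDerivAt (fun b : ℝ => Real.sqrt π * (Real.sqrt b)⁻¹)
          (-(Real.sqrt π / 2)) 1 := by
        have h0 := (Real.hasDerivAt_sqrt one_ne_zero).inv
          (by simp : Real.sqrt 1 ≠ 0)
        have h1 := h0.const_mul (Real.sqrt π)
        refine h1.congr_deriv (Eq.symm ?_)
        simp [Real.sqrt_one]
        ring
      exact hd.congr_of_eventuallyEq heq.symm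
    have huniq := hG.unique hG2
    have h2 : (∫ x : ℝ, x ^ 2 * Real.exp (-1 * x ^ 2))
        = ∫ x : ℝ, x ^ 2 * Real.exp (-x ^ 2) := by norm_num
    rw [h2] at huniq
    linarith
  · filter_upwards with x
    intro b hb
    rw [mem_ball, Real.dist_eq, abs_sub_lt_iff] at hb
    have hb2 : 1 / 2 < b := by linarith [hb.2]
    rw [norm_neg, Real.norm_eq_abs, abs_mul, abs_of_nonneg (Real.exp_pos _).le, abs_pow]
    apply mul_le_mul_of_nonneg_left _ (by positivity)
    apply Real.exp_le_exp.mpr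
    nlinarith [sq_nonneg x]
  · exact integrable_pow_gauss (by norm_num) 2
  · filter_upwards with x
    intro b _
    have h1 : HasDerivAt (fun b : ℝ => -b * x ^ 2) (-x ^ 2) b := by
      simpa using ((hasDerivAt_id b).neg.mul_const (x ^ 2))
    have h2 := h1.exp
    refine h2.congr_deriv (Eq.symm ?_)
    ring

theorem tendsto_sqrt_atTop : Tendsto Real.sqrt atTop atTop := by
  apply tendsto_atTop_atTop_of_monotone (fun a b hab => Real.sqrt_le_sqrt hab)
  intro b
  exact ⟨(max b 0) ^ 2, by
    rw [Real.sqrt_sq (le_max_right _ _)]; exact le_max_left _ _⟩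

theorem tendsto_inner (hcont : ContinuousAt f z) (s : ℝ) :
    Tendsto (fun t : ℝ => f (z + z * ((Real.sqrt t)⁻¹ * s))) atTop (nhds (f z)) := by
  have h1 : Tendsto (fun t : ℝ => (Real.sqrt t)⁻¹) atTop (nhds 0) :=
    tendsto_sqrt_atTop.inv_tendsto_atTop
  have h2 : Tendsto (fun t : ℝ => z + z * ((Real.sqrt t)⁻¹ * s)) atTop (nhds z) := by
    have h3 := ((h1.mul_const s).const_mul z).const_add z
    simpa using h3
  exact hcont.tendsto.comp h2

theorem tendsto_scaled (hmeas : Measurable f) (hnonneg : ∀ x, 0 ≤ f x)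
    (hA : ∀ x, f x ≤ A) (hcont : ContinuousAt f z) (k : ℕ) :
    Tendsto (fun t : ℝ => ∫ s : ℝ, s ^ k * Real.exp (-s ^ 2)
        * f (z + z * ((Real.sqrt t)⁻¹ * s))) atTop
      (nhds ((∫ s : ℝ, s ^ k * Real.exp (-s ^ 2)) * f z)) := by
  have hA0 : 0 ≤ A := le_trans (hnonneg z) (hA z)
  have hval : (∫ s : ℝ, s ^ k * Real.exp (-s ^ 2)) * f z
      = ∫ s : ℝ, s ^ k * Real.exp (-s ^ 2) * f z := by
    rw [integral_mul_const]
  rw [hval]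
  apply tendsto_integral_filter_of_dominated_convergence
    (bound := fun s => A * (|s| ^ k * Real.exp (-1 * s ^ 2)))
  · apply Eventually.of_forall
    intro t
    apply Measurable.aestronglyMeasurable
    exact ((measurable_id.pow_const k).mul
      (((measurable_id.pow_const 2).neg).exp)).mul
      (hmeas.comp (measurable_const.add ((measurable_id.const_mul _).const_mul z)))
  · apply Eventually.of_forall
    intro t
    filter_upwards with s
    have h1 : 0 ≤ f (z + z * ((Real.sqrt t)⁻¹ * s)) := hnonneg _
    rw [Real.norm_eq_abs, abs_mul, abs_mul, abs_pow, abs_of_nonneg (Real.exp_pos _).le,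
      abs_of_nonneg h1]
    calc |s| ^ k * Real.exp (-s ^ 2) * f (z + z * ((Real.sqrt t)⁻¹ * s))
        ≤ |s| ^ k * Real.exp (-s ^ 2) * A :=
          mul_le_mul_of_nonneg_left (hA _) (by positivity)
      _ = A * (|s| ^ k * Real.exp (-1 * s ^ 2)) := by rw [neg_one_mul]; ring
  · exact (integrable_pow_gauss one_pos k).const_mul A
  · apply Eventually.of_forall
    intro s
    exact (tendsto_inner hcont s).const_mul _

theorem subst_aux (f : ℝ → ℝ) (z : ℝ) (k : ℕ) {t : ℝ} (ht : 0 < t) :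
    (∫ s : ℝ, s ^ k * Real.exp (-s ^ 2) * f (z + z * ((Real.sqrt t)⁻¹ * s)))
      = Real.sqrt t ^ (k + 1) * ∫ u : ℝ, u ^ k * Real.exp (-t * u ^ 2) * f (z + z * u) := by
  have hst : 0 < Real.sqrt t := Real.sqrt_pos.mpr ht
  set g : ℝ → ℝ := fun u => u ^ k * Real.exp (-t * u ^ 2) * f (z + z * u) with hg
  have h1 : (∫ x : ℝ, g ((Real.sqrt t)⁻¹ * x))
      = Real.sqrt t * ∫ u, g u := by
    rw [Measure.integral_comp_mul_left g ((Real.sqrt t)⁻¹), inv_inv, abs_of_pos hst,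
      smul_eq_mul]
  have h2 : ∀ s : ℝ, g ((Real.sqrt t)⁻¹ * s)
      = ((Real.sqrt t)⁻¹) ^ k * (s ^ k * Real.exp (-s ^ 2) * f (z + z * ((Real.sqrt t)⁻¹ * s))) := by
    intro s
    have harg : -t * ((Real.sqrt t)⁻¹ * s) ^ 2 = -s ^ 2 := by
      rw [mul_pow, inv_pow, Real.sq_sqrt ht.le]
      field_simp
    rw [hg]
    simp only []
    rw [harg, mul_pow]
    ring
  have h3 : (∫ x : ℝ, g ((Real.sqrt t)⁻¹ * x))
      = ((Real.sqrt t)⁻¹) ^ k * ∫ s : ℝ, s ^ k * Real.exp (-s ^ 2)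
          * f (z + z * ((Real.sqrt t)⁻¹ * s)) := by
    simp_rw [h2]
    rw [integral_const_mul]
  rw [h3] at h1
  have hpk : (Real.sqrt t) ^ k ≠ 0 := by positivity
  calc (∫ s : ℝ, s ^ k * Real.exp (-s ^ 2) * f (z + z * ((Real.sqrt t)⁻¹ * s)))
      = Real.sqrt t ^ k * ((Real.sqrt t ^ k)⁻¹
          * ∫ s : ℝ, s ^ k * Real.exp (-s ^ 2) * f (z + z * ((Real.sqrt t)⁻¹ * s))) := by
        field_simp
    _ = Real.sqrt t ^ k * (Real.sqrt t * ∫ u, g u) := by rw [← inv_pow, h1]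
    _ = Real.sqrt t ^ (k + 1) * ∫ u, g u := by rw [pow_succ]; ring

theorem cs_strict (hnonneg : ∀ x, 0 ≤ f x)
    {δ : ℝ} (hδ : 0 < δ) (hδ' : ∀ u : ℝ, |u| < δ → f z / 2 ≤ f (z + z * u))
    (hfz : 0 < f z) {t : ℝ}
    (int0 : Integrable fun u : ℝ => u ^ 0 * Real.exp (-t * u ^ 2) * f (z + z * u))
    (int2 : Integrable fun u : ℝ => u ^ 2 * Real.exp (-t * u ^ 2) * f (z + z * u))
    (int4 : Integrable fun u : ℝ => u ^ 4 * Real.exp (-t * u ^ 2) * f (z + z * u))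
    (hI : 0 < ∫ u : ℝ, u ^ 0 * Real.exp (-t * u ^ 2) * f (z + z * u)) :
    (∫ u : ℝ, u ^ 2 * Real.exp (-t * u ^ 2) * f (z + z * u)) ^ 2
      < (∫ u : ℝ, u ^ 4 * Real.exp (-t * u ^ 2) * f (z + z * u))
        * ∫ u : ℝ, u ^ 0 * Real.exp (-t * u ^ 2) * f (z + z * u) := by
  set I := ∫ u : ℝ, u ^ 0 * Real.exp (-t * u ^ 2) * f (z + z * u) with hIdef
  set J := ∫ u : ℝ, u ^ 2 * Real.exp (-t * u ^ 2) * f (z + z * u) with hJdef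
  set K := ∫ u : ℝ, u ^ 4 * Real.exp (-t * u ^ 2) * f (z + z * u) with hKdef
  set m : ℝ := J / I with hmdef
  have hm : m * I = J := div_mul_cancel₀ J hI.ne'
  set W : ℝ → ℝ := fun u => (u ^ 2 - m) ^ 2 * (u ^ 0 * Real.exp (-t * u ^ 2) * f (z + z * u))
    with hWdef
  have hWeq : W = fun u => (u ^ 4 * Real.exp (-t * u ^ 2) * f (z + z * u))
      - (2 * m) * (u ^ 2 * Real.exp (-t * u ^ 2) * f (z + z * u))
      + m ^ 2 * (u ^ 0 * Real.exp (-t * u ^ 2) * f (z + z * u)) := by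
    funext u; simp only [hWdef]; ring
  have i2 : Integrable (fun u : ℝ => 2 * m * (u ^ 2 * Real.exp (-t * u ^ 2) * f (z + z * u))) :=
    int2.const_mul (2 * m)
  have i0 : Integrable (fun u : ℝ => m ^ 2 * (u ^ 0 * Real.exp (-t * u ^ 2) * f (z + z * u))) :=
    int0.const_mul (m ^ 2)
  have i42 : Integrable (fun u : ℝ => u ^ 4 * Real.exp (-t * u ^ 2) * f (z + z * u)
      - 2 * m * (u ^ 2 * Real.exp (-t * u ^ 2) * f (z + z * u))) := int4.sub i2
  have hWint : Integrable W := by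
    rw [hWeq]
    exact (int4.sub i2).add i0
  have hWval : (∫ u, W u) = K - 2 * m * J + m ^ 2 * I := by
    rw [hWeq]
    rw [integral_add i42 i0, integral_sub int4 i2, integral_const_mul, integral_const_mul]
  have hWnn : ∀ u, 0 ≤ W u := by
    intro u
    apply mul_nonneg (sq_nonneg _)
    apply mul_nonneg (mul_nonneg (by simp) (Real.exp_pos _).le) (hnonneg _)
  have hWpos : 0 < ∫ u, W u := by
    rcases lt_or_eq_of_le (integral_nonneg (f := W) hWnn) with h | h
    · exact h
    · exfalso
      have hae : ∀ᵐ u : ℝ, W u = 0 := by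
        have h5 := (integral_eq_zero_iff_of_nonneg hWnn hWint).mp h.symm
        filter_upwards [h5] with u hu using hu
      have hnull : volume {u : ℝ | ¬ W u = 0} = 0 := ae_iff.mp hae
      have hsub : Ioo (-δ) δ ⊆ {u : ℝ | ¬ W u = 0}
          ∪ ({-Real.sqrt m, Real.sqrt m} : Set ℝ) := by
        intro u hu
        by_cases hc : u ^ 2 = m
        · right
          have habs : |u| = Real.sqrt m := by rw [← hc, Real.sqrt_sq_eq_abs]
          simp only [Set.mem_insert_iff, Set.mem_singleton_iff]
          rcases abs_cases u with ⟨he, _⟩ | ⟨he, _⟩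
          · right; rw [← habs, he]
          · left; rw [← habs, he, neg_neg]
        · left
          have hne0 : u ^ 2 - m ≠ 0 := sub_ne_zero.mpr hc
          have h1 : 0 < (u ^ 2 - m) ^ 2 := by positivity
          have h2 : f z / 2 ≤ f (z + z * u) := hδ' u (abs_lt.mpr ⟨hu.1, hu.2⟩)
          have h3 : 0 < W u := by
            apply mul_pos h1
            simp only [pow_zero, one_mul]
            exact mul_pos (Real.exp_pos _) (lt_of_lt_of_le (by linarith) h2)
          exact fun hcontra => h3.ne' hcontra
      have hpair : volume ({-Real.sqrt m, Real.sqrt m} : Set ℝ) = 0 :=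
        ((Set.finite_singleton _).insert _).measure_zero volume
      have hle : volume (Ioo (-δ) δ) = 0 := by
        apply le_antisymm _ zero_le
        calc volume (Ioo (-δ) δ)
            ≤ volume ({u : ℝ | ¬ W u = 0} ∪ ({-Real.sqrt m, Real.sqrt m} : Set ℝ)) :=
              measure_mono hsub
          _ ≤ volume {u : ℝ | ¬ W u = 0} + volume ({-Real.sqrt m, Real.sqrt m} : Set ℝ) :=
              measure_union_le _ _
          _ = 0 := by rw [hnull, hpair, add_zero]
      rw [Real.volume_Ioo] at hle
      have hdd : (0:ℝ) < δ - -δ := by linarith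
      exact (ENNReal.ofReal_pos.mpr hdd).ne' hle
  have hfinal : (K - 2 * m * J + m ^ 2 * I) * I = K * I - J ^ 2 := by
    linear_combination (m * I - J) * hm
  have h5 : 0 < (K - 2 * m * J + m ^ 2 * I) * I := mul_pos (hWval ▸ hWpos) hI
  linarith

end Stmt12Aux

/-- If `σₙ → 0`, then for all large `n` there is a unique `tₙ > 0` with
`h'(tₙ) = -σₙ²`, where `h(t) = log(z ∫ e^{-tu²} f(z+zu) du)`; moreover
`tₙ ∼ 1/(2σₙ²)` and `h(tₙ) = log σₙ + log(√(2π) z f(z)) + o(1)`. -/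
theorem stmt_12 (f : ℝ → ℝ) (hmeas : Measurable f) (hnonneg : ∀ x, 0 ≤ f x)
    (hdens : ∫ x, f x = 1) (hbdd : ∃ A, ∀ x, f x ≤ A)
    (z : ℝ) (hz : 0 < z) (hcont : ContinuousAt f z) (hfz : 0 < f z)
    (h : ℝ → ℝ)
    (hdef : ∀ t, h t = Real.log (z * ∫ u, Real.exp (-t * u ^ 2) * f (z + z * u)))
    (σ : ℕ → ℝ) (hσpos : ∀ n, 0 < σ n) (hσ0 : Tendsto σ atTop (nhds 0)) :
    (∀ᶠ n : ℕ in atTop, ∃! t : ℝ, 0 < t ∧ deriv h t = -σ n ^ 2) ∧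
    ∀ t : ℕ → ℝ, (∀ᶠ n : ℕ in atTop, 0 < t n ∧ deriv h (t n) = -σ n ^ 2) →
      Tendsto (fun n => t n * (2 * σ n ^ 2)) atTop (nhds 1) ∧
      Tendsto (fun n => h (t n) - Real.log (σ n)
          - Real.log (Real.sqrt (2 * Real.pi) * z * f z)) atTop (nhds 0) := by
  classical
  obtain ⟨A, hA⟩ := hbdd
  obtain ⟨δ, hδ, hδ'⟩ := Stmt12Aux.delta_aux hcont hfz
  set Mk : ℕ → ℝ → ℝ :=
    fun k t => ∫ u, u ^ k * Real.exp (-t * u ^ 2) * f (z + z * u) with hMk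
  have hint : ∀ (k : ℕ) (t : ℝ), 0 < t →
      Integrable fun u : ℝ => u ^ k * Real.exp (-t * u ^ 2) * f (z + z * u) :=
    fun k t ht => Stmt12Aux.integrable_aux hmeas hnonneg hA k ht
  have hpos : ∀ (k : ℕ), Even k → ∀ t : ℝ, 0 < t → 0 < Mk k t :=
    fun k hk t ht => Stmt12Aux.M_pos hnonneg hδ hδ' hfz hk ht (hint k t ht)
  set R : ℝ → ℝ := fun t => Mk 2 t / Mk 0 t with hR
  have hderivM : ∀ (k : ℕ) (t : ℝ), 0 < t → HasDerivAt (Mk k) (-Mk (k + 2) t) t :=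
    fun k t ht => Stmt12Aux.hasDerivAt_M hmeas hnonneg hA k ht
  have hRderiv : ∀ t : ℝ, 0 < t →
      HasDerivAt R ((Mk 2 t ^ 2 - Mk 4 t * Mk 0 t) / (Mk 0 t) ^ 2) t := by
    intro t ht
    have hd2 := hderivM 2 t ht
    have hd0 := hderivM 0 t ht
    have h1 := hd2.div hd0 (hpos 0 Even.zero t ht).ne'
    refine h1.congr_deriv (Eq.symm ?_)
    show _ = (-Mk (2+2) t * Mk 0 t - Mk 2 t * -Mk (0+2) t) / Mk 0 t ^ 2
    norm_num
    ring
  have hRcont : ContinuousOn R (Set.Ioi 0) := fun x hx =>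
    ((hRderiv x hx).differentiableAt.continuousAt).continuousWithinAt
  have hRanti : StrictAntiOn R (Set.Ioi 0) := by
    apply strictAntiOn_of_deriv_neg (convex_Ioi 0) hRcont
    intro x hx
    rw [interior_Ioi] at hx
    rw [(hRderiv x hx).deriv]
    apply div_neg_of_neg_of_pos
    · have hcs := Stmt12Aux.cs_strict hnonneg hδ hδ' hfz
        (hint 0 x hx) (hint 2 x hx) (hint 4 x hx) (hpos 0 Even.zero x hx)
      have : Mk 2 x ^ 2 < Mk 4 x * Mk 0 x := hcs
      linarith
    · exact pow_pos (hpos 0 Even.zero x hx) 2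
  have hheq : h = fun x => Real.log (z * Mk 0 x) := by
    funext x
    rw [hdef x]
    congr 2
    simp [hMk]
  have hhderiv : ∀ t : ℝ, 0 < t → deriv h t = -R t := by
    intro t ht
    have hI := hpos 0 Even.zero t ht
    have h1 : HasDerivAt (fun x => Real.log (z * Mk 0 x))
        ((z * -Mk (0 + 2) t) / (z * Mk 0 t)) t :=
      ((hderivM 0 t ht).const_mul z).log (by positivity)
    rw [hheq, h1.deriv]
    show (z * -Mk 2 t) / (z * Mk 0 t) = -(Mk 2 t / Mk 0 t)
    field_simp
  -- asymptotics
  have hscaled : ∀ k : ℕ,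
      Tendsto (fun t : ℝ => Real.sqrt t ^ (k + 1) * Mk k t) atTop
        (nhds ((∫ s : ℝ, s ^ k * Real.exp (-s ^ 2)) * f z)) := by
    intro k
    apply (Stmt12Aux.tendsto_scaled hmeas hnonneg hA hcont k).congr'
    filter_upwards [eventually_gt_atTop (0:ℝ)] with t ht
    exact Stmt12Aux.subst_aux f z k ht
  have hgauss0 : (∫ s : ℝ, s ^ 0 * Real.exp (-s ^ 2)) = Real.sqrt Real.pi := by
    simp only [pow_zero, one_mul]
    simpa using integral_gaussian 1
  have hA' : Tendsto (fun t : ℝ => Real.sqrt t ^ 1 * Mk 0 t) atTop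
      (nhds (Real.sqrt Real.pi * f z)) := by
    have h0 := hscaled 0
    rw [hgauss0] at h0
    exact h0
  have hB' : Tendsto (fun t : ℝ => Real.sqrt t ^ 3 * Mk 2 t) atTop
      (nhds (Real.sqrt Real.pi / 2 * f z)) := by
    have h0 := hscaled 2
    rw [Stmt12Aux.gauss_two] at h0
    exact h0
  have hπ : (0:ℝ) < Real.sqrt Real.pi := Real.sqrt_pos.mpr Real.pi_pos
  have hne : Real.sqrt Real.pi * f z ≠ 0 := by positivity
  have hC : Tendsto (fun t : ℝ => 2 * t * R t) atTop (nhds 1) := by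
    have hq := (hB'.div hA' hne).const_mul (2:ℝ)
    have hval : 2 * ((Real.sqrt Real.pi / 2 * f z) / (Real.sqrt Real.pi * f z)) = 1 := by
      field_simp
    rw [hval] at hq
    apply hq.congr'
    filter_upwards [eventually_gt_atTop (0:ℝ)] with t ht
    have hst : 0 < Real.sqrt t := Real.sqrt_pos.mpr ht
    have e1 : Real.sqrt t ^ 3 * Mk 2 t = Real.sqrt t * (t * Mk 2 t) := by
      have e0 : Real.sqrt t ^ 2 = t := Real.sq_sqrt ht.le
      calc Real.sqrt t ^ 3 * Mk 2 t = Real.sqrt t ^ 2 * Real.sqrt t * Mk 2 t := by ring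
        _ = Real.sqrt t * (t * Mk 2 t) := by rw [e0]; ring
    have e2 : Real.sqrt t ^ 1 * Mk 0 t = Real.sqrt t * Mk 0 t := by rw [pow_one]
    show 2 * (Real.sqrt t ^ 3 * Mk 2 t / (Real.sqrt t ^ 1 * Mk 0 t)) = 2 * t * R t
    rw [e1, e2, mul_div_mul_left _ _ hst.ne', hR]
    show 2 * (t * Mk 2 t / Mk 0 t) = 2 * t * (Mk 2 t / Mk 0 t)
    rw [mul_div_assoc]
    ring
  have hR0 : Tendsto R atTop (nhds 0) := by
    have h2t : Tendsto (fun t : ℝ => 2 * t) atTop atTop :=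
      tendsto_id.const_mul_atTop zero_lt_two
    have hinv : Tendsto (fun t : ℝ => (2 * t)⁻¹) atTop (nhds 0) :=
      h2t.inv_tendsto_atTop
    have hmul := hC.mul hinv
    rw [mul_zero] at hmul
    apply hmul.congr'
    filter_upwards [eventually_gt_atTop (0:ℝ)] with t ht
    have h2t0 : (2:ℝ) * t ≠ 0 := by positivity
    field_simp
  have hσsq : Tendsto (fun n => σ n ^ 2) atTop (nhds 0) := by
    have hmm := hσ0.mul hσ0
    rw [mul_zero] at hmm
    apply hmm.congr'
    filter_upwards with n
    ring
  constructor
  · -- existence and uniqueness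
    have hr1 : 0 < R 1 :=
      div_pos (hpos 2 (by decide) 1 one_pos) (hpos 0 Even.zero 1 one_pos)
    filter_upwards [hσsq.eventually (eventually_lt_nhds hr1)] with n hn
    have hsn : 0 < σ n ^ 2 := by have := hσpos n; positivity
    obtain ⟨T, hT1, hTlt⟩ := ((eventually_ge_atTop (1:ℝ)).and
      (hR0.eventually (eventually_lt_nhds hsn))).exists
    have hcontOn : ContinuousOn R (Set.Icc 1 T) :=
      hRcont.mono (fun x hx => lt_of_lt_of_le one_pos hx.1)
    have hmem : σ n ^ 2 ∈ Set.Icc (R T) (R 1) := ⟨hTlt.le, hn.le⟩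
    obtain ⟨t₀, ht₀mem, ht₀⟩ := intermediate_value_Icc' hT1 hcontOn hmem
    have ht₀pos : (0:ℝ) < t₀ := lt_of_lt_of_le one_pos ht₀mem.1
    refine ⟨t₀, ⟨ht₀pos, by rw [hhderiv t₀ ht₀pos, ht₀]⟩, ?_⟩
    rintro t' ⟨ht'p, ht'd⟩
    have ht'R : R t' = σ n ^ 2 := by
      rw [hhderiv t' ht'p] at ht'd
      linarith
    exact hRanti.injOn (Set.mem_Ioi.mpr ht'p) (Set.mem_Ioi.mpr ht₀pos)
      (by rw [ht'R, ht₀])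
  · -- asymptotics of solutions
    intro tf htf
    have hre : ∀ᶠ n in atTop, R (tf n) = σ n ^ 2 ∧ 0 < tf n := by
      filter_upwards [htf] with n hn
      obtain ⟨h1, h2⟩ := hn
      refine ⟨?_, h1⟩
      rw [hhderiv (tf n) h1] at h2
      linarith
    have htop : Tendsto tf atTop atTop := by
      rw [tendsto_atTop]
      intro M
      set M' := max M 1 with hM'
      have hM'pos : (0:ℝ) < M' := lt_of_lt_of_le one_pos (le_max_right _ _)
      have hRM' : 0 < R M' :=
        div_pos (hpos 2 (by decide) M' hM'pos) (hpos 0 Even.zero M' hM'pos)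
      filter_upwards [hre, hσsq.eventually (eventually_lt_nhds hRM')] with n hn hlt
      by_contra hc
      push_neg at hc
      have h1 : tf n < M' := lt_of_lt_of_le hc (le_max_left _ _)
      have h2 := hRanti (Set.mem_Ioi.mpr hn.2) (Set.mem_Ioi.mpr hM'pos) h1
      rw [hn.1] at h2
      linarith
    constructor
    · have hcomp := hC.comp htop
      apply hcomp.congr'
      filter_upwards [hre] with n hn
      show 2 * tf n * R (tf n) = tf n * (2 * σ n ^ 2)
      rw [hn.1]; ring
    · set C := Real.sqrt (2 * Real.pi) * z * f z with hC0
      have hCpos : 0 < C := by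
        apply mul_pos (mul_pos (Real.sqrt_pos.mpr (by positivity)) hz) hfz
      have htσ : Tendsto (fun n => tf n * σ n ^ 2) atTop (nhds (1/2)) := by
        have hcomp := (hC.comp htop).const_mul (1/2 : ℝ)
        rw [mul_one] at hcomp
        apply hcomp.congr'
        filter_upwards [hre] with n hn
        show 1/2 * (2 * tf n * R (tf n)) = tf n * σ n ^ 2
        rw [hn.1]; ring
      have hsq2 : Tendsto (fun n => Real.sqrt (tf n * σ n ^ 2)) atTop
          (nhds (Real.sqrt (1/2))) := htσ.sqrt
      have hIA : Tendsto (fun n => Real.sqrt (tf n) ^ 1 * Mk 0 (tf n)) atTop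
          (nhds (Real.sqrt Real.pi * f z)) := hA'.comp htop
      have hne2 : C * Real.sqrt (1/2) ≠ 0 := by
        have : (0:ℝ) < Real.sqrt (1/2) := Real.sqrt_pos.mpr (by norm_num)
        positivity
      have hmain := (hIA.mul_const z).div (hsq2.const_mul C) hne2
      have hval : Real.sqrt Real.pi * f z * z / (C * Real.sqrt (1/2)) = 1 := by
        have h2 : Real.sqrt (2 * Real.pi) * Real.sqrt (1/2) = Real.sqrt Real.pi := by
          rw [← Real.sqrt_mul (by positivity) (1/2)]
          rw [show (2 * Real.pi) * (1/2) = Real.pi by ring]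
        have h1 : C * Real.sqrt (1/2) = Real.sqrt Real.pi * z * f z := by
          calc C * Real.sqrt (1/2)
              = (Real.sqrt (2 * Real.pi) * Real.sqrt (1/2)) * z * f z := by
                rw [hC0]; ring
            _ = Real.sqrt Real.pi * z * f z := by rw [h2]
        rw [h1, div_eq_one_iff_eq (by positivity)]
        ring
      rw [hval] at hmain
      have hlog := (Real.continuousAt_log one_ne_zero).tendsto.comp hmain
      rw [Real.log_one] at hlog
      apply hlog.congr'
      filter_upwards [hre] with n hn
      have htn : 0 < tf n := hn.2
      have hIpos : 0 < Mk 0 (tf n) := hpos 0 Even.zero _ htn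
      have hσn : 0 < σ n := hσpos n
      have e1 : Real.sqrt (tf n * σ n ^ 2) = Real.sqrt (tf n) * σ n := by
        rw [Real.sqrt_mul htn.le, Real.sqrt_sq hσn.le]
      have hst : 0 < Real.sqrt (tf n) := Real.sqrt_pos.mpr htn
      show Real.log (Real.sqrt (tf n) ^ 1 * Mk 0 (tf n) * z
          / (C * Real.sqrt (tf n * σ n ^ 2)))
        = h (tf n) - Real.log (σ n) - Real.log (Real.sqrt (2 * Real.pi) * z * f z)
      have e2 : Real.sqrt (tf n) ^ 1 * Mk 0 (tf n) * z / (C * Real.sqrt (tf n * σ n ^ 2))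
          = (z * Mk 0 (tf n)) / (C * σ n) := by
        rw [e1, pow_one]
        rw [show Real.sqrt (tf n) * Mk 0 (tf n) * z
            = Real.sqrt (tf n) * (z * Mk 0 (tf n)) by ring,
          show C * (Real.sqrt (tf n) * σ n) = Real.sqrt (tf n) * (C * σ n) by ring,
          mul_div_mul_left _ _ hst.ne']
      rw [e2, hheq]
      show Real.log (z * Mk 0 (tf n) / (C * σ n))
        = Real.log (z * Mk 0 (tf n)) - Real.log (σ n) - Real.log C
      rw [Real.log_div (by positivity) (by positivity),
        Real.log_mul hCpos.ne' hσn.ne']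
      ring
end
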